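/- (Proposition 2.) Let K ≥ 2 and let Δ° = {y ∈ ℝ^{K−1} : y_j > 0 for all j, and ∑_{j=1}^{K−1} y_j < 1} be the open coordinate simplex. Define p : (0,∞) × Δ° → ℝ by p(t, y) = (Γ(t+K)/Γ(t+1)) · y_1^t, and define the vector field u : (0,∞) × Δ° → ℝ^{K−1} by u_j(t, y) = C(y_1, t) · (δ_{1j} − y_j) for j = 1,…,K−1, where δ_{1j} is the Kronecker delta. Then for all t > 0 and all y ∈ Δ°, the transport (continuity) equation holds: ∂p/∂t (t,y) + ∑_{j=1}^{K−1} ∂/∂y_j [ p · u_j ](t,y) = 0. -/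

import Mathlib

open MeasureTheory intervalIntegral Real Set

/-- The incomplete beta function `B(x; a, c) = ∫_0^x s^{a-1}(1-s)^{c-1} ds`. -/
noncomputable def incBeta (x a c : ℝ) : ℝ := ∫ s in (0:ℝ)..x, s ^ (a - 1) * (1 - s) ^ (c - 1)

/-- The regularized incomplete beta function `I_x(a, c) = B(x; a, c) / B(a, c)`. -/
noncomputable def regIncBeta (x a c : ℝ) : ℝ := incBeta x a c / incBeta 1 a c

/-- `Ĩ_x(a, c) = ∂ I_x(a, c) / ∂a`. -/
noncomputable def Itilde (x a c : ℝ) : ℝ := deriv (fun a' : ℝ => regIncBeta x a' c) a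

/-- The Dirichlet flow-matching coefficient
`C(b, t) = -Ĩ_b(t+1, K-1) · B(t+1, K-1) / ((1-b)^{K-1} · b^t)`. -/
noncomputable def Ccoef (K : ℕ) (b t : ℝ) : ℝ :=
  -Itilde b (t + 1) ((K : ℝ) - 1) * incBeta 1 (t + 1) ((K : ℝ) - 1) /
    ((1 - b) ^ (K - 1) * b ^ t)

lemma rpow_mul_abs_log_le {d s : ℝ} (hd : 0 < d) (hs : 0 < s) (hs1 : s ≤ 1) :
    s ^ d * |Real.log s| ≤ 1 / d := by
  have hlog : Real.log s ≤ 0 := Real.log_nonpos hs.le hs1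
  rw [abs_of_nonpos hlog]
  have h3 : s ^ (-d) = Real.exp (Real.log s * (-d)) := Real.rpow_def_of_pos hs (-d)
  have h4 : Real.log s * (-d) + 1 ≤ s ^ (-d) := by
    rw [h3]; exact Real.add_one_le_exp _
  have h5 : d * (-Real.log s) ≤ s ^ (-d) := by nlinarith
  have h6 : s ^ d * s ^ (-d) = 1 := by
    rw [← Real.rpow_add hs]; simp
  have h7 : 0 ≤ s ^ d := Real.rpow_nonneg hs.le d
  have h8 : s ^ d * (d * (-Real.log s)) ≤ s ^ d * s ^ (-d) := by
    exact mul_le_mul_of_nonneg_left h5 h7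
  rw [h6] at h8
  rw [le_div_iff₀ hd]
  nlinarith [h8]

lemma cont_integrand {a c : ℝ} (ha : 1 < a) (hc : 1 ≤ c) :
    Continuous fun s : ℝ => s ^ (a - 1) * (1 - s) ^ (c - 1) := by
  rw [continuous_iff_continuousAt]
  intro s
  exact (Real.continuousAt_rpow_const s (a - 1) (Or.inr (by linarith))).mul
    ((Real.continuousAt_rpow_const (1 - s) (c - 1) (Or.inr (by linarith))).comp
      ((continuous_const.sub continuous_id).continuousAt))

lemma meas_integrandLog {a c : ℝ} (ha : 1 < a) (hc : 1 ≤ c) :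
    Measurable fun s : ℝ => s ^ (a - 1) * Real.log s * (1 - s) ^ (c - 1) := by
  have h1 : Continuous fun s : ℝ => s ^ (a - 1) := by
    rw [continuous_iff_continuousAt]
    intro s; exact Real.continuousAt_rpow_const s (a - 1) (Or.inr (by linarith))
  have h2 : Continuous fun s : ℝ => (1 - s) ^ (c - 1) := by
    rw [continuous_iff_continuousAt]
    intro s
    exact (Real.continuousAt_rpow_const (1 - s) (c - 1) (Or.inr (by linarith))).comp
      ((continuous_const.sub continuous_id).continuousAt)
  exact ((h1.measurable.mul Real.measurable_log)).mul h2.measurable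

lemma abs_integrandLog_le {a c s d : ℝ} (hd : 0 < d) (hda : d ≤ a - 1) (hc : 1 ≤ c)
    (hs : 0 < s) (hs1 : s ≤ 1) :
    |s ^ (a - 1) * Real.log s * (1 - s) ^ (c - 1)| ≤ 2 / d := by
  have h0 : |s ^ (a - 1) * Real.log s * (1 - s) ^ (c - 1)|
      = s ^ (a - 1) * |Real.log s| * (1 - s) ^ (c - 1) := by
    rw [abs_mul, abs_mul, abs_of_nonneg (Real.rpow_nonneg hs.le _),
      abs_of_nonneg (Real.rpow_nonneg (by linarith) _)]
  rw [h0]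
  have hQ : (1 - s) ^ (c - 1) ≤ 1 :=
    Real.rpow_le_one (by linarith) (by linarith) (by linarith)
  have hQ0 : 0 ≤ (1 - s) ^ (c - 1) := Real.rpow_nonneg (by linarith) _
  have h1 : s ^ (a - 1) ≤ s ^ d := Real.rpow_le_rpow_of_exponent_ge hs hs1 hda
  have h2 : s ^ d = s ^ (d / 2) * s ^ (d / 2) := by
    rw [← Real.rpow_add hs]; ring_nf
  have h3 : s ^ (d / 2) ≤ 1 := Real.rpow_le_one hs.le hs1 (by linarith)
  have h4 : s ^ (d / 2) * |Real.log s| ≤ 1 / (d / 2) :=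
    rpow_mul_abs_log_le (by linarith) hs hs1
  have h5 : 0 ≤ s ^ (d / 2) := Real.rpow_nonneg hs.le _
  have hlogabs : 0 ≤ |Real.log s| := abs_nonneg _
  have key : s ^ (a - 1) * |Real.log s| ≤ 2 / d := by
    calc s ^ (a - 1) * |Real.log s| ≤ s ^ d * |Real.log s| :=
          mul_le_mul_of_nonneg_right h1 hlogabs
      _ = s ^ (d / 2) * (s ^ (d / 2) * |Real.log s|) := by rw [h2]; ring
      _ ≤ 1 * (1 / (d / 2)) := by
          apply mul_le_mul h3 h4 (by positivity) (by norm_num)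
      _ = 2 / d := by rw [one_mul]; ring
  calc s ^ (a - 1) * |Real.log s| * (1 - s) ^ (c - 1)
      ≤ s ^ (a - 1) * |Real.log s| * 1 := by
        apply mul_le_mul_of_nonneg_left hQ (by positivity)
    _ = s ^ (a - 1) * |Real.log s| := mul_one _
    _ ≤ 2 / d := key

lemma intervalIntegrableLog {a c x : ℝ} (ha : 1 < a) (hc : 1 ≤ c) (hx : 0 < x) (hx1 : x ≤ 1) :
    IntervalIntegrable (fun s : ℝ => s ^ (a - 1) * Real.log s * (1 - s) ^ (c - 1))
      volume 0 x := by
  rw [intervalIntegrable_iff_integrableOn_Ioc_of_le hx.le]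
  apply MeasureTheory.Integrable.mono' (g := fun _ : ℝ => 2 / (a - 1))
    (integrableOn_const measure_Ioc_lt_top.ne)
    (meas_integrandLog ha hc).aestronglyMeasurable.restrict
  rw [ae_restrict_iff' measurableSet_Ioc]
  filter_upwards with s hs
  exact abs_integrandLog_le (by linarith) le_rfl hc hs.1 (le_trans hs.2 hx1)

noncomputable def incBeta' (x a c : ℝ) : ℝ :=
  ∫ s in (0:ℝ)..x, s ^ (a - 1) * Real.log s * (1 - s) ^ (c - 1)

lemma hasDerivAt_incBeta_param {c x t : ℝ} (hc : 1 ≤ c) (ht : 0 < t)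
    (hx : 0 < x) (hx1 : x ≤ 1) :
    HasDerivAt (fun a : ℝ => ∫ s in (0:ℝ)..x, s ^ (a - 1) * (1 - s) ^ (c - 1))
      (incBeta' x (t + 1) c) (t + 1) := by
  have hball : ∀ a ∈ Metric.ball (t + 1) (t / 2), t / 2 ≤ a - 1 := by
    intro a haa
    rw [Metric.mem_ball, Real.dist_eq, abs_lt] at haa
    linarith [haa.1]
  have main := intervalIntegral.hasDerivAt_integral_of_dominated_loc_of_deriv_le
    (F := fun a s => s ^ (a - 1) * (1 - s) ^ (c - 1))
    (F' := fun a s => s ^ (a - 1) * Real.log s * (1 - s) ^ (c - 1))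
    (x₀ := t + 1) (a := 0) (b := x) (μ := volume)
    (bound := fun _ => 2 / (t / 2))
    (s := Metric.ball (t + 1) (t / 2)) (Metric.ball_mem_nhds (t + 1) (half_pos ht))
    ?_ ?_ ?_ ?_ ?_ ?_
  · exact main.2
  · filter_upwards [Metric.ball_mem_nhds (t + 1) (half_pos ht)] with a haa
    have ha1 : 1 < a := by linarith [hball a haa]
    exact (cont_integrand ha1 hc).aestronglyMeasurable.restrict
  · exact (cont_integrand (by linarith) hc).intervalIntegrable 0 x
  · exact (meas_integrandLog (by linarith) hc).aestronglyMeasurable.restrict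
  · apply ae_of_all
    intro s hs a haa
    rw [Set.uIoc_of_le hx.le] at hs
    rw [Real.norm_eq_abs]
    exact abs_integrandLog_le (half_pos ht) (hball a haa) hc hs.1 (le_trans hs.2 hx1)
  · exact intervalIntegrable_const
  · apply ae_of_all
    intro s hs a _
    rw [Set.uIoc_of_le hx.le] at hs
    have hs0 : 0 < s := hs.1
    have h1 : HasDerivAt (fun a : ℝ => s ^ (a - 1)) (s ^ (a - 1) * Real.log s) a := by
      have h2 : HasDerivAt (fun a : ℝ => a - 1) 1 a := (hasDerivAt_id a).sub_const 1
      have h3 := (Real.hasStrictDerivAt_const_rpow hs0 (a - 1)).hasDerivAt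
      have := h3.comp a h2
      simpa [Function.comp_def] using this
    convert h1.mul_const ((1 - s) ^ (c - 1)) using 1

lemma gamma_mul_gamma_eq {a c : ℝ} (ha : 0 < a) (hc : 0 < c) :
    Real.Gamma a * Real.Gamma c = Real.Gamma (a + c) * incBeta 1 a c := by
  have h := Complex.Gamma_mul_Gamma_eq_betaIntegral (s := (a : ℂ)) (t := (c : ℂ))
    (by simpa using ha) (by simpa using hc)
  have hbeta : Complex.betaIntegral (a : ℂ) (c : ℂ) = ((incBeta 1 a c : ℝ) : ℂ) := by
    rw [Complex.betaIntegral, incBeta, ← intervalIntegral.integral_ofReal]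
    apply intervalIntegral.integral_congr
    intro s hs
    rw [Set.uIcc_of_le (by norm_num : (0:ℝ) ≤ 1)] at hs
    simp only
    rw [Complex.ofReal_mul, Complex.ofReal_cpow hs.1 (a - 1),
      Complex.ofReal_cpow (by linarith [hs.2] : (0:ℝ) ≤ 1 - s) (c - 1)]
    push_cast
    ring
  rw [hbeta, ← Complex.ofReal_add, Complex.Gamma_ofReal, Complex.Gamma_ofReal,
    Complex.Gamma_ofReal, ← Complex.ofReal_mul, ← Complex.ofReal_mul] at h
  exact_mod_cast h

lemma incBeta_one_eq {a c : ℝ} (ha : 0 < a) (hc : 0 < c) :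
    incBeta 1 a c = Real.Gamma a * Real.Gamma c / Real.Gamma (a + c) := by
  have h := gamma_mul_gamma_eq ha hc
  have hG : Real.Gamma (a + c) ≠ 0 := (Real.Gamma_pos_of_pos (by linarith)).ne'
  field_simp
  linarith [h]

lemma incBeta_one_pos {a c : ℝ} (ha : 0 < a) (hc : 0 < c) : 0 < incBeta 1 a c := by
  rw [incBeta_one_eq ha hc]
  have := Real.Gamma_pos_of_pos ha
  have := Real.Gamma_pos_of_pos hc
  have := Real.Gamma_pos_of_pos (show 0 < a + c by linarith)
  positivity

lemma hasDerivAt_incBeta_param' {c x t : ℝ} (hc : 1 ≤ c) (ht : 0 < t)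
    (hx : 0 < x) (hx1 : x ≤ 1) :
    HasDerivAt (fun a : ℝ => incBeta x a c) (incBeta' x (t + 1) c) (t + 1) :=
  hasDerivAt_incBeta_param hc ht hx hx1

lemma Itilde_eq {c x t : ℝ} (hc : 1 ≤ c) (ht : 0 < t) (hx : 0 < x) (hx1 : x ≤ 1) :
    Itilde x (t + 1) c =
      (incBeta' x (t + 1) c * incBeta 1 (t + 1) c
        - incBeta x (t + 1) c * incBeta' 1 (t + 1) c) / (incBeta 1 (t + 1) c) ^ 2 := by
  have hB : incBeta 1 (t + 1) c ≠ 0 := (incBeta_one_pos (by linarith) (by linarith)).ne'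
  have h1 := hasDerivAt_incBeta_param' hc ht hx hx1
  have h2 := hasDerivAt_incBeta_param' hc ht one_pos le_rfl
  have h3 := h1.div h2 hB
  exact (h3.congr_deriv rfl).deriv

lemma hasDerivAt_incBeta_x {a c b : ℝ} (ha : 1 < a) (hc : 1 ≤ c) (hb : 0 < b) (hb1 : b < 1) :
    HasDerivAt (fun x : ℝ => incBeta x a c) (b ^ (a - 1) * (1 - b) ^ (c - 1)) b := by
  have hcont := cont_integrand ha hc
  exact intervalIntegral.integral_hasDerivAt_right (hcont.intervalIntegrable 0 b)
    ⟨Set.univ, Filter.univ_mem, hcont.aestronglyMeasurable.restrict⟩ hcont.continuousAt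

lemma hasDerivAt_incBeta'_x {a c b : ℝ} (ha : 1 < a) (hc : 1 ≤ c) (hb : 0 < b) (hb1 : b < 1) :
    HasDerivAt (fun x : ℝ => incBeta' x a c)
      (b ^ (a - 1) * Real.log b * (1 - b) ^ (c - 1)) b := by
  have hmeas := meas_integrandLog ha hc
  have hcont : ContinuousAt (fun s : ℝ => s ^ (a - 1) * Real.log s * (1 - s) ^ (c - 1)) b := by
    apply ContinuousAt.mul
    · exact (Real.continuousAt_rpow_const b (a - 1) (Or.inr (by linarith))).mul
        (Real.continuousAt_log hb.ne')
    · exact (Real.continuousAt_rpow_const (1 - b) (c - 1) (Or.inr (by linarith))).comp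
        ((continuous_const.sub continuous_id).continuousAt)
  exact intervalIntegral.integral_hasDerivAt_right
    (intervalIntegrableLog ha hc hb hb1.le)
    ⟨Set.univ, Filter.univ_mem, hmeas.aestronglyMeasurable.restrict⟩ hcont

/-- **Proposition 2.** On the open coordinate simplex
`Δ° = {y : y_j > 0, ∑ y_j < 1} ⊆ ℝ^{K-1}`, the Dirichlet conditional probability path
`p(t, y) = (Γ(t+K)/Γ(t+1)) y_1^t` and the vector field
`u_j(t, y) = C(y_1, t)(δ_{1j} - y_j)` satisfy the transport (continuity) equation
`∂p/∂t + ∑_j ∂/∂y_j (p u_j) = 0`. -/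
theorem dirichletFM_transport_equation (K : ℕ) (hK : 2 ≤ K) :
    ∀ t : ℝ, 0 < t → ∀ y : Fin (K - 1) → ℝ, (∀ j, 0 < y j) → (∑ j, y j) < 1 →
      deriv (fun t' : ℝ =>
          Real.Gamma (t' + K) / Real.Gamma (t' + 1) * (y ⟨0, by omega⟩) ^ t') t
      + ∑ j : Fin (K - 1),
          deriv (fun s : ℝ =>
            (Real.Gamma (t + K) / Real.Gamma (t + 1) *
                ((Function.update y j s) ⟨0, by omega⟩) ^ t) *
              (Ccoef K ((Function.update y j s) ⟨0, by omega⟩) t *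
                ((if j = ⟨0, by omega⟩ then (1 : ℝ) else 0) - s)))
            (y j)
      = 0 := by
  intro t ht y hy hsum
  have hc : (1:ℝ) ≤ (K:ℝ) - 1 := by
    have : (2:ℝ) ≤ (K:ℝ) := by exact_mod_cast hK
    linarith
  have hc0 : (0:ℝ) < (K:ℝ) - 1 := by linarith
  set z : Fin (K - 1) := ⟨0, by omega⟩ with hz
  set b : ℝ := y z with hbdef
  have hb : 0 < b := hy z
  have hb1 : b < 1 := lt_of_le_of_lt
    (Finset.single_le_sum (f := y) (fun i _ => (hy i).le) (Finset.mem_univ z)) hsum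
  have h1b : (0:ℝ) < 1 - b := by linarith
  set B : ℝ := incBeta 1 (t + 1) ((K:ℝ) - 1) with hB
  set L : ℝ := incBeta' 1 (t + 1) ((K:ℝ) - 1) with hL
  have hBpos : 0 < B := incBeta_one_pos (by linarith) hc0
  set G : ℝ := Real.Gamma (t + K) / Real.Gamma (t + 1) with hGdef
  have hGB : G * B = Real.Gamma ((K:ℝ) - 1) := by
    have hid := gamma_mul_gamma_eq (a := t + 1) (c := (K:ℝ) - 1) (by linarith) hc0
    have harg : t + 1 + ((K:ℝ) - 1) = t + (K:ℝ) := by ring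
    rw [harg] at hid
    have hΓ : Real.Gamma (t + 1) ≠ 0 := (Real.Gamma_pos_of_pos (by linarith)).ne'
    rw [hGdef]
    field_simp
    linarith [hid]
  have hbt : HasDerivAt (fun t' : ℝ => b ^ t') (b ^ t * Real.log b) t :=
    (Real.hasStrictDerivAt_const_rpow hb t).hasDerivAt
  have hBd : HasDerivAt (fun t' : ℝ => incBeta 1 (t' + 1) ((K:ℝ) - 1)) L t := by
    have h := hasDerivAt_incBeta_param' (c := (K:ℝ) - 1) hc ht one_pos le_rfl
    have hcomp := h.comp t ((hasDerivAt_id t).add_const 1)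
    simpa [Function.comp_def] using hcomp
  have hT : deriv (fun t' : ℝ => Real.Gamma (t' + K) / Real.Gamma (t' + 1) * b ^ t') t
      = (Real.Gamma ((K:ℝ) - 1) * (b ^ t * Real.log b) * B
          - Real.Gamma ((K:ℝ) - 1) * b ^ t * L) / B ^ 2 := by
    have heq : (fun t' : ℝ => Real.Gamma (t' + K) / Real.Gamma (t' + 1) * b ^ t')
        =ᶠ[nhds t] fun t' : ℝ =>
          Real.Gamma ((K:ℝ) - 1) * b ^ t' / incBeta 1 (t' + 1) ((K:ℝ) - 1) := by
      filter_upwards [Ioi_mem_nhds ht] with t' ht'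
      have ht' : (0:ℝ) < t' := ht'
      have hB' : 0 < incBeta 1 (t' + 1) ((K:ℝ) - 1) := incBeta_one_pos (by linarith) hc0
      have hid := gamma_mul_gamma_eq (a := t' + 1) (c := (K:ℝ) - 1) (by linarith) hc0
      have harg : t' + 1 + ((K:ℝ) - 1) = t' + (K:ℝ) := by ring
      rw [harg] at hid
      have hΓ : Real.Gamma (t' + 1) ≠ 0 := (Real.Gamma_pos_of_pos (by linarith)).ne'
      field_simp
      nlinarith [hid, Real.rpow_pos_of_pos hb t']
    rw [heq.deriv_eq]
    have hder := (hbt.const_mul (Real.Gamma ((K:ℝ) - 1))).div hBd hBpos.ne'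
    exact hder.deriv
  show deriv (fun t' : ℝ => Real.Gamma (t' + K) / Real.Gamma (t' + 1) * b ^ t') t
      + ∑ j : Fin (K - 1),
          deriv (fun s : ℝ =>
            (G * ((Function.update y j s) z) ^ t) *
              (Ccoef K ((Function.update y j s) z) t *
                ((if j = z then (1 : ℝ) else 0) - s)))
            (y j)
      = 0
  rw [← Finset.add_sum_erase Finset.univ _ (Finset.mem_univ z)]
  have hoff : ∀ j ∈ Finset.univ.erase z,
      deriv (fun s : ℝ =>
          (G * ((Function.update y j s) z) ^ t) *
            (Ccoef K ((Function.update y j s) z) t *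
              ((if j = z then (1 : ℝ) else 0) - s))) (y j)
        = -(G * b ^ t * Ccoef K b t) := by
    intro j hj
    have hjz : j ≠ z := Finset.ne_of_mem_erase hj
    have hfun : (fun s : ℝ =>
          (G * ((Function.update y j s) z) ^ t) *
            (Ccoef K ((Function.update y j s) z) t *
              ((if j = z then (1 : ℝ) else 0) - s)))
        = fun s : ℝ => (G * b ^ t) * (Ccoef K b t * (0 - s)) := by
      funext s
      rw [Function.update_of_ne hjz.symm, if_neg hjz]
    rw [hfun]
    have h1 : HasDerivAt (fun s : ℝ => (0:ℝ) - s) (-1) (y j) := (hasDerivAt_id _).const_sub 0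
    have h2 := (h1.const_mul (Ccoef K b t)).const_mul (G * b ^ t)
    rw [h2.deriv]
    ring
  rw [Finset.sum_congr rfl hoff, Finset.sum_const]
  have hcard : (Finset.univ.erase z).card = K - 2 := by
    rw [Finset.card_erase_of_mem (Finset.mem_univ z), Finset.card_univ, Fintype.card_fin]
    omega
  rw [hcard, nsmul_eq_mul]
  have hcast2 : ((K - 2 : ℕ) : ℝ) = (K : ℝ) - 2 := by
    have h2 : (K - 2 : ℕ) + 2 = K := by omega
    have := congrArg (fun n : ℕ => (n : ℝ)) h2
    push_cast at this
    linarith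
  rw [hcast2]
  -- derivatives in the spatial variable at b
  set J0b : ℝ := incBeta b (t + 1) ((K:ℝ) - 1) with hJ0b
  set J1b : ℝ := incBeta' b (t + 1) ((K:ℝ) - 1) with hJ1b
  have hP : HasDerivAt (fun x : ℝ => x ^ t) (t * b ^ (t - 1)) b :=
    Real.hasDerivAt_rpow_const (Or.inl hb.ne')
  have hsub : HasDerivAt (fun x : ℝ => 1 - x) (-1) b := (hasDerivAt_id b).const_sub 1
  have hW : HasDerivAt (fun x : ℝ => (1 - x) ^ (K - 1))
      ((↑(K - 1) : ℝ) * (1 - b) ^ (K - 1 - 1) * (-1)) b := HasDerivAt.fun_pow hsub (K - 1)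
  have hJ0 : HasDerivAt (fun x : ℝ => incBeta x (t + 1) ((K:ℝ) - 1))
      (b ^ t * (1 - b) ^ ((K:ℝ) - 1 - 1)) b := by
    have h := hasDerivAt_incBeta_x (a := t + 1) (c := (K:ℝ) - 1) (by linarith) hc hb hb1
    rw [show t + 1 - 1 = t from by ring] at h
    exact h
  have hJ1 : HasDerivAt (fun x : ℝ => incBeta' x (t + 1) ((K:ℝ) - 1))
      (b ^ t * Real.log b * (1 - b) ^ ((K:ℝ) - 1 - 1)) b := by
    have h := hasDerivAt_incBeta'_x (a := t + 1) (c := (K:ℝ) - 1) (by linarith) hc hb hb1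
    rw [show t + 1 - 1 = t from by ring] at h
    exact h
  have hDne : (1 - b) ^ (K - 1) * b ^ t ≠ 0 :=
    mul_ne_zero (pow_ne_zero _ (by linarith)) (Real.rpow_pos_of_pos hb t).ne'
  have hIt := ((hJ1.mul_const B).sub (hJ0.mul_const L)).div_const (B ^ 2)
  have hN := hIt.neg.mul_const B
  have hD := hW.mul hP
  have hC := hN.div hD hDne
  have hu := hC.mul hsub
  have hg := (hP.const_mul G).mul hu
  have hCb : Ccoef K b t
      = -((J1b * B - J0b * L) / B ^ 2) * B / ((1 - b) ^ (K - 1) * b ^ t) := by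
    rw [Ccoef, Itilde_eq hc ht hb hb1.le, ← hB, ← hL, ← hJ0b, ← hJ1b]
  have hdiag : deriv (fun s : ℝ =>
        (G * ((Function.update y z s) z) ^ t) *
          (Ccoef K ((Function.update y z s) z) t *
            ((if z = z then (1 : ℝ) else 0) - s))) (y z)
      = (G * (t * b ^ (t - 1))) *
          ((-((J1b * B - J0b * L) / B ^ 2) * B / ((1 - b) ^ (K - 1) * b ^ t)) * (1 - b))
        + (G * b ^ t) *
          (((-((b ^ t * Real.log b * (1 - b) ^ ((K:ℝ) - 1 - 1) * B
                - b ^ t * (1 - b) ^ ((K:ℝ) - 1 - 1) * L) / B ^ 2) * B)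
              * ((1 - b) ^ (K - 1) * b ^ t)
            - (-((J1b * B - J0b * L) / B ^ 2) * B)
              * ((↑(K - 1) : ℝ) * (1 - b) ^ (K - 1 - 1) * (-1) * b ^ t
                  + (1 - b) ^ (K - 1) * (t * b ^ (t - 1))))
              / ((1 - b) ^ (K - 1) * b ^ t) ^ 2 * (1 - b)
            + (-((J1b * B - J0b * L) / B ^ 2) * B / ((1 - b) ^ (K - 1) * b ^ t)) * (-1)) := by
    have hfun : (fun s : ℝ =>
          (G * ((Function.update y z s) z) ^ t) *
            (Ccoef K ((Function.update y z s) z) t *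
              ((if z = z then (1 : ℝ) else 0) - s)))
        = fun s : ℝ => (G * s ^ t) * (Ccoef K s t * (1 - s)) := by
      funext s
      rw [Function.update_self, if_pos rfl]
    rw [hfun]
    have hev : (fun s : ℝ => (G * s ^ t) * (Ccoef K s t * (1 - s)))
        =ᶠ[nhds b] fun x : ℝ => (G * x ^ t) *
            ((-((incBeta' x (t + 1) ((K:ℝ) - 1) * B
                - incBeta x (t + 1) ((K:ℝ) - 1) * L) / B ^ 2) * B
              / ((1 - x) ^ (K - 1) * x ^ t)) * (1 - x)) := by
      filter_upwards [Ioo_mem_nhds hb hb1] with x hx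
      rw [Ccoef, Itilde_eq hc ht hx.1 hx.2.le, ← hB, ← hL]
    rw [hev.deriv_eq]
    exact hg.deriv
  rw [hT, hdiag, hCb]
  have hcast1 : ((K - 1 : ℕ) : ℝ) = (K : ℝ) - 1 := by
    have h2 : (K - 1 : ℕ) + 1 = K := by omega
    have := congrArg (fun n : ℕ => (n : ℝ)) h2
    push_cast at this
    linarith
  have hpow2 : (1 - b) ^ (K - 1 - 1) = (1 - b) ^ ((K:ℝ) - 1 - 1) := by
    rw [← Real.rpow_natCast (1 - b) (K - 1 - 1)]
    congr 1
    have h2 : (K - 1 - 1 : ℕ) + 2 = K := by omega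
    have := congrArg (fun n : ℕ => (n : ℝ)) h2
    push_cast at this
    linarith
  have hpow1 : (1 - b) ^ (K - 1) = (1 - b) * (1 - b) ^ ((K:ℝ) - 1 - 1) := by
    have e1 : (1 - b) ^ (1:ℝ) * (1 - b) ^ ((K:ℝ) - 1 - 1) = (1 - b) ^ ((K:ℝ) - 1) := by
      rw [← Real.rpow_add h1b]; norm_num
    rw [← Real.rpow_natCast (1 - b) (K - 1), hcast1, ← e1, Real.rpow_one]
  have hbt1 : b ^ (t - 1) = b ^ t / b := by
    rw [Real.rpow_sub hb, Real.rpow_one]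
  rw [← hGB, hpow2, hpow1, hbt1, hcast1]
  have hPne : b ^ t ≠ 0 := (Real.rpow_pos_of_pos hb t).ne'
  have hQne : (1 - b) ^ ((K:ℝ) - 1 - 1) ≠ 0 := (Real.rpow_pos_of_pos h1b _).ne'
  field_simp
  ring
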